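/- For the greedy B_h-set (a_k(h))_{k≥0} with a₀(h)=0, a₁(h)=1, the third element satisfies a₃(h) = h² + h + 1 for all h ≥ 1. -/

import Mathlib

/-- A is a B_h-set: each integer has at most one representation as a weakly increasing
sum of h elements of A. -/
def IsBhSet (h : ℕ) (A : Set ℕ) : Prop :=
  ∀ f g : Fin h → ℕ, (∀ i, f i ∈ A) → (∀ i, g i ∈ A) → Monotone f → Monotone g →
    ∑ i, f i = ∑ i, g i → f = g

lemma bh_anti {h : ℕ} {A B : Set ℕ} (hsub : A ⊆ B) (H : IsBhSet h B) : IsBhSet h A :=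
  fun f g hf hg => H f g (fun i => hsub (hf i)) (fun i => hsub (hg i))

/-- Two monotone tuples with the same value counts are equal. -/
lemma mono_eq {n : ℕ} {f g : Fin n → ℕ} (hfm : Monotone f) (hgm : Monotone g)
    (hc : ∀ v, (Finset.univ.filter fun x => f x = v).card
             = (Finset.univ.filter fun x => g x = v).card) : f = g := by
  apply List.ofFn_injective
  refine List.Perm.eq_of_sortedLE hfm.sortedLE_ofFn hgm.sortedLE_ofFn ?_
  rw [List.perm_iff_count]
  intro b
  have hcnt : ∀ F : Fin n → ℕ, List.count b (List.ofFn F)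
      = (Finset.univ.filter fun x => F x = b).card := by
    intro F
    have h1 : (↑(List.ofFn F) : Multiset ℕ) = Multiset.map F Finset.univ.val := by
      rw [List.ofFn_eq_map]
      rfl
    have h2 : List.count b (List.ofFn F) = Multiset.count b (↑(List.ofFn F) : Multiset ℕ) :=
      (Multiset.coe_count b _).symm
    rw [h2, h1, Multiset.count_map]
    simp only [Finset.card, Finset.filter]
    congr 1
    exact Multiset.filter_congr (fun x _ => by constructor <;> (intro h; omega))
  rw [hcnt f, hcnt g, hc b]

lemma div_mod_unique' (n a b a' b' : ℕ) (ha : a ≤ n) (ha' : a' ≤ n)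
    (he : a + b * (n + 1) = a' + b' * (n + 1)) : a = a' ∧ b = b' := by
  have e1 : (a + b * (n + 1)) % (n + 1) = a := by
    rw [Nat.add_mul_mod_self_right, Nat.mod_eq_of_lt (by omega)]
  have e2 : (a' + b' * (n + 1)) % (n + 1) = a' := by
    rw [Nat.add_mul_mod_self_right, Nat.mod_eq_of_lt (by omega)]
  have haa : a = a' := by rw [← e1, he, e2]
  refine ⟨haa, ?_⟩
  rw [haa] at he
  have := Nat.add_left_cancel he
  exact Nat.eq_of_mul_eq_mul_right (by omega) this

lemma kk_aux (h i j k i' j' k' : ℕ) (h1 : i + j + k ≤ h)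
    (hik : i + k = i' + k')
    (hjk : j + k * h = j' + k' * h) (hkk : k ≤ k') : k = k' := by
  obtain ⟨d, rfl⟩ := Nat.le.dest hkk
  have e : j + k * h = (j' + d * h) + k * h := by rw [hjk]; ring
  have hj : j = j' + d * h := Nat.add_right_cancel e
  rcases Nat.eq_zero_or_pos d with hd0 | hd0
  · omega
  · exfalso
    have hdh : h ≤ d * h := Nat.le_mul_of_pos_left h hd0
    obtain ⟨E, hE⟩ : ∃ E, E = d * h := ⟨_, rfl⟩
    rw [← hE] at hj hdh
    omega

lemma arith_uniq (h i j k i' j' k' : ℕ) (hh : 1 ≤ h) (h1 : i + j + k ≤ h)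
    (h2 : i' + j' + k' ≤ h)
    (he : i + j * (h + 1) + k * (h ^ 2 + h + 1) = i' + j' * (h + 1) + k' * (h ^ 2 + h + 1)) :
    i = i' ∧ j = j' ∧ k = k' := by
  have e1 : i + j * (h + 1) + k * (h ^ 2 + h + 1) = (i + k) + (j + k * h) * (h + 1) := by ring
  have e2 : i' + j' * (h + 1) + k' * (h ^ 2 + h + 1) = (i' + k') + (j' + k' * h) * (h + 1) := by
    ring
  obtain ⟨hik, hjk⟩ := div_mod_unique' h (i + k) (j + k * h) (i' + k') (j' + k' * h)
    (by omega) (by omega) (by rw [← e1, ← e2]; exact he)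
  have hk : k = k' := by
    rcases le_total k k' with hle | hle
    · exact kk_aux h i j k i' j' k' h1 hik hjk hle
    · exact (kk_aux h i' j' k' i j k h2 hik.symm hjk.symm hle).symm
  subst hk
  have hj : j = j' := Nat.add_right_cancel hjk
  omega

/-- Step functions used to build explicit monotone tuples. -/
def tripF (t₁ t₂ v w : ℕ) : ℕ → ℕ := fun i => if i < t₁ then 0 else if i < t₂ then v else w

lemma tripF_mono {t₁ t₂ v w : ℕ} (hvw : v ≤ w) :
    Monotone (tripF t₁ t₂ v w) := by
  intro a b hab
  unfold tripF
  split_ifs <;> omega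

lemma tripF_mono_fin {n t₁ t₂ v w : ℕ} (hvw : v ≤ w) :
    Monotone (fun x : Fin n => tripF t₁ t₂ v w (x : ℕ)) :=
  (tripF_mono hvw).comp (fun _ _ hab => hab)

lemma tripF_mem {A : Set ℕ} {t₁ t₂ v w : ℕ} (h0 : 0 ∈ A) (hv : v ∈ A) (hw : w ∈ A) :
    ∀ i : ℕ, tripF t₁ t₂ v w i ∈ A := by
  intro i; unfold tripF; split_ifs <;> assumption

lemma tripF_sum (n t₁ t₂ v w : ℕ) (h1 : t₁ ≤ t₂) (h2 : t₂ ≤ n) :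
    ∑ x : Fin n, tripF t₁ t₂ v w (x : ℕ) = (t₂ - t₁) * v + (n - t₂) * w := by
  rw [Fin.sum_univ_eq_sum_range]
  rw [← Finset.sum_range_add_sum_Ico _ h2, ← Finset.sum_range_add_sum_Ico _ h1]
  have e0 : ∑ i ∈ Finset.range t₁, tripF t₁ t₂ v w i = 0 :=
    Finset.sum_eq_zero fun i hi => by
      simp only [tripF, if_pos (Finset.mem_range.mp hi)]
  have e1 : ∑ i ∈ Finset.Ico t₁ t₂, tripF t₁ t₂ v w i = (t₂ - t₁) * v := by
    rw [Finset.sum_congr rfl (fun i hi => ?_), Finset.sum_const, Nat.card_Ico, smul_eq_mul]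
    have := Finset.mem_Ico.mp hi
    simp only [tripF, if_neg (by omega : ¬ i < t₁), if_pos this.2]
  have e2 : ∑ i ∈ Finset.Ico t₂ n, tripF t₁ t₂ v w i = (n - t₂) * w := by
    rw [Finset.sum_congr rfl (fun i hi => ?_), Finset.sum_const, Nat.card_Ico, smul_eq_mul]
    have := Finset.mem_Ico.mp hi
    simp only [tripF, if_neg (by omega : ¬ i < t₁), if_neg (by omega : ¬ i < t₂)]
  rw [e0, e1, e2, zero_add]

lemma not_bh_small (h m : ℕ) (hm2 : 2 ≤ m) (hmh : m ≤ h) (A : Set ℕ)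
    (h0 : 0 ∈ A) (h1 : 1 ∈ A) (hm : m ∈ A) : ¬ IsBhSet h A := by
  intro H
  have hfg := H (fun x : Fin h => tripF (h - m) h 1 1 (x : ℕ))
    (fun x : Fin h => tripF (h - 1) (h - 1) m m (x : ℕ))
    (fun x => tripF_mem h0 h1 h1 _) (fun x => tripF_mem h0 hm hm _)
    (tripF_mono_fin le_rfl) (tripF_mono_fin le_rfl) ?_
  · have hlt : h - 1 < h := by omega
    have hev := congrFun hfg ⟨h - 1, hlt⟩
    have hval : ((⟨h - 1, hlt⟩ : Fin h) : ℕ) = h - 1 := rfl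
    simp only [tripF, hval] at hev
    split_ifs at hev <;> omega
  · rw [tripF_sum _ _ _ _ _ (by omega) (by omega), tripF_sum _ _ _ _ _ le_rfl (by omega)]
    have e1 : h - (h - m) = m := by omega
    have e2 : h - (h - 1) = 1 := by omega
    have e3 : h - 1 - (h - 1) = 0 := by omega
    have e4 : h - h = 0 := by omega
    rw [e1, e2, e3, e4]
    ring

lemma not_bh_mid (h m : ℕ) (hh : 1 ≤ h) (hm1 : h + 1 < m) (hm2 : m < h ^ 2 + h + 1)
    (A : Set ℕ) (h0 : 0 ∈ A) (h1 : 1 ∈ A) (hh1 : h + 1 ∈ A) (hm : m ∈ A) :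
    ¬ IsBhSet h A := by
  intro H
  set q := m / (h + 1) with hq
  set r := m % (h + 1) with hr
  have hdm : (h + 1) * q + r = m := Nat.div_add_mod m (h + 1)
  have hrlt : r < h + 1 := Nat.mod_lt _ (by omega)
  have hq1 : 1 ≤ q := by
    rw [hq, Nat.le_div_iff_mul_le (by omega)]
    omega
  have hsq : h ^ 2 = h * h := pow_two h
  have hqh : q ≤ h := by
    by_contra hc
    push_neg at hc
    have : (h + 1) * (h + 1) ≤ (h + 1) * q := Nat.mul_le_mul_left _ hc
    have he : (h + 1) * (h + 1) = h * h + 2 * h + 1 := by ring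
    omega
  rcases le_or_gt (q + r) h with hqr | hqr
  · -- m = q*(h+1) + r directly
    have hfg := H (fun x : Fin h => tripF (h - 1) (h - 1) m m (x : ℕ))
      (fun x : Fin h => tripF (h - q - r) (h - q) 1 (h + 1) (x : ℕ))
      (fun x => tripF_mem h0 hm hm _) (fun x => tripF_mem h0 h1 hh1 _)
      (tripF_mono_fin le_rfl) (tripF_mono_fin (by omega)) ?_
    · have hlt : h - 1 < h := by omega
      have hev := congrFun hfg ⟨h - 1, hlt⟩
      have hval : ((⟨h - 1, hlt⟩ : Fin h) : ℕ) = h - 1 := rfl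
      simp only [tripF, hval] at hev
      split_ifs at hev <;> omega
    · rw [tripF_sum _ _ _ _ _ le_rfl (by omega), tripF_sum _ _ _ _ _ (by omega) (by omega)]
      have e0 : h - 1 - (h - 1) = 0 := by omega
      have e1 : h - (h - 1) = 1 := by omega
      have e2 : h - q - (h - q - r) = r := by omega
      have e3 : h - (h - q) = q := by omega
      rw [e0, e1, e2, e3, ← hdm]
      ring
  · -- m + (h+1-r) = (q+1)*(h+1)
    have hq' : q ≤ h - 1 := by
      by_contra hc
      push_neg at hc
      have hq2 : q = h := by omega
      rw [hq2] at hdm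
      have : (h + 1) * h = h * h + h := by ring
      omega
    have hr2 : 2 ≤ r := by omega
    have hfg := H (fun x : Fin h => tripF (r - 2) (h - 1) 1 m (x : ℕ))
      (fun x : Fin h => tripF (h - q - 1) (h - q - 1) (h + 1) (h + 1) (x : ℕ))
      (fun x => tripF_mem h0 h1 hm _) (fun x => tripF_mem h0 hh1 hh1 _)
      (tripF_mono_fin (by omega)) (tripF_mono_fin le_rfl) ?_
    · have hlt : h - 1 < h := by omega
      have hev := congrFun hfg ⟨h - 1, hlt⟩
      have hval : ((⟨h - 1, hlt⟩ : Fin h) : ℕ) = h - 1 := rfl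
      simp only [tripF, hval] at hev
      split_ifs at hev <;> omega
    · rw [tripF_sum _ _ _ _ _ (by omega) (by omega), tripF_sum _ _ _ _ _ le_rfl (by omega)]
      obtain ⟨s, hs⟩ : ∃ s, r + s = h + 1 := ⟨h + 1 - r, by omega⟩
      have e1 : h - 1 - (r - 2) = s := by omega
      have e2 : h - (h - 1) = 1 := by omega
      have e3 : h - q - 1 - (h - q - 1) = 0 := by omega
      have e4 : h - (h - q - 1) = q + 1 := by omega
      rw [e1, e2, e3, e4, ← hdm, ← hs]
      ring

lemma main_bh (h : ℕ) (hh : 1 ≤ h) : IsBhSet h ({0, 1, h + 1, h ^ 2 + h + 1} : Set ℕ) := by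
  have hM1 : h + 1 < h ^ 2 + h + 1 := by
    have : 0 < h ^ 2 := by positivity
    calc h + 1 < h ^ 2 + (h + 1) := Nat.lt_add_of_pos_left this
    _ = h ^ 2 + h + 1 := by ring
  obtain ⟨M, hMeq⟩ : ∃ M, h ^ 2 + h + 1 = M := ⟨_, rfl⟩
  rw [hMeq] at hM1 ⊢
  intro f g hf hg hfm hgm hsum
  have cnt_sum : ∀ (F : Fin h → ℕ) (v c : ℕ),
      (∑ x : Fin h, if F x = v then c else 0)
        = (Finset.univ.filter fun x => F x = v).card * c := by
    intro F v c
    rw [← Finset.sum_filter, Finset.sum_const, smul_eq_mul]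
  have key : ∀ F : Fin h → ℕ, (∀ x, F x ∈ ({0, 1, h + 1, M} : Set ℕ)) →
      (∑ x, F x = (Finset.univ.filter fun x => F x = 1).card
          + (Finset.univ.filter fun x => F x = h + 1).card * (h + 1)
          + (Finset.univ.filter fun x => F x = M).card * M) ∧
      ((Finset.univ.filter fun x => F x = 0).card
          + (Finset.univ.filter fun x => F x = 1).card
          + (Finset.univ.filter fun x => F x = h + 1).card
          + (Finset.univ.filter fun x => F x = M).card = h) := by
    intro F hFmem
    constructor
    · have step : ∀ x : Fin h, F x = (if F x = 1 then 1 else 0)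
          + (if F x = h + 1 then h + 1 else 0) + (if F x = M then M else 0) := by
        intro x
        have hx := hFmem x
        simp only [Set.mem_insert_iff, Set.mem_singleton_iff] at hx
        rcases hx with hx | hx | hx | hx <;> rw [hx] <;> split_ifs <;>
          first
          | exact (‹False›).elim
          | omega
      rw [Finset.sum_congr rfl (fun x _ => step x), Finset.sum_add_distrib,
        Finset.sum_add_distrib, cnt_sum, cnt_sum, cnt_sum, mul_one]
    · have step : ∀ x : Fin h, (1 : ℕ) = (if F x = 0 then 1 else 0)
          + (if F x = 1 then 1 else 0) + (if F x = h + 1 then 1 else 0)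
          + (if F x = M then 1 else 0) := by
        intro x
        have hx := hFmem x
        simp only [Set.mem_insert_iff, Set.mem_singleton_iff] at hx
        rcases hx with hx | hx | hx | hx <;> rw [hx] <;> split_ifs <;>
          first
          | exact (‹False›).elim
          | omega
      have htot : ∑ x : Fin h, (1 : ℕ) = h := by simp
      rw [Finset.sum_congr rfl (fun x _ => step x), Finset.sum_add_distrib,
        Finset.sum_add_distrib, Finset.sum_add_distrib, cnt_sum, cnt_sum, cnt_sum,
        cnt_sum, mul_one, mul_one, mul_one, mul_one] at htot
      exact htot
  obtain ⟨hfsum, hfcard⟩ := key f hf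
  obtain ⟨hgsum, hgcard⟩ := key g hg
  obtain ⟨e1, e2, e3⟩ := arith_uniq h
      ((Finset.univ.filter fun x => f x = 1).card)
      ((Finset.univ.filter fun x => f x = h + 1).card)
      ((Finset.univ.filter fun x => f x = M).card)
      ((Finset.univ.filter fun x => g x = 1).card)
      ((Finset.univ.filter fun x => g x = h + 1).card)
      ((Finset.univ.filter fun x => g x = M).card)
      hh (by omega) (by omega)
      (by rw [hMeq, ← hfsum, ← hgsum]; exact hsum)
  apply mono_eq hfm hgm
  intro v
  by_cases hv0 : v = 0
  · subst hv0; omega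
  by_cases hv1 : v = 1
  · subst hv1; exact e1
  by_cases hv2 : v = h + 1
  · subst hv2; exact e2
  by_cases hv3 : v = M
  · subst hv3; exact e3
  have hz : ∀ F : Fin h → ℕ, (∀ x, F x ∈ ({0, 1, h + 1, M} : Set ℕ)) →
      (Finset.univ.filter fun x => F x = v).card = 0 := by
    intro F hFmem
    rw [Finset.card_eq_zero, Finset.filter_eq_empty_iff]
    intro x _
    have hx := hFmem x
    simp only [Set.mem_insert_iff, Set.mem_singleton_iff] at hx
    rcases hx with hx | hx | hx | hx <;> rw [hx] <;> omega
  rw [hz f hf, hz g hg]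

/-- For the greedy B_h-set with a₀ = 0, a₁ = 1, one has a₃(h) = h² + h + 1. -/
theorem greedy_Bh_a3 (h : ℕ) (hh : 1 ≤ h) (a : ℕ → ℕ)
    (h0 : a 0 = 0) (h1 : a 1 = 1)
    (hgreedy : ∀ k : ℕ, 1 ≤ k →
      a (k + 1) = sInf {m : ℕ | a k < m ∧ IsBhSet h (insert m (a '' Set.Iic k))}) :
    a 3 = h ^ 2 + h + 1 := by
  have hM1 : h + 1 < h ^ 2 + h + 1 := by
    have : 0 < h ^ 2 := by positivity
    calc h + 1 < h ^ 2 + (h + 1) := Nat.lt_add_of_pos_left this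
    _ = h ^ 2 + h + 1 := by ring
  -- Step 1 : a 2 = h + 1
  have him1 : a '' Set.Iic 1 = ({0, 1} : Set ℕ) := by
    ext x
    simp only [Set.mem_image, Set.mem_Iic, Set.mem_insert_iff, Set.mem_singleton_iff]
    constructor
    · rintro ⟨k, hk, rfl⟩
      interval_cases k
      · simp [h0]
      · simp [h1]
    · rintro (rfl | rfl)
      · exact ⟨0, by omega, h0⟩
      · exact ⟨1, by omega, h1⟩
  have e2 := hgreedy 1 le_rfl
  rw [h1, him1] at e2
  have ha2 : a 2 = h + 1 := by
    have hmem : (h + 1) ∈ {m : ℕ | 1 < m ∧ IsBhSet h (insert m ({0, 1} : Set ℕ))} := by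
      constructor
      · omega
      · refine bh_anti ?_ (main_bh h hh)
        intro x hx
        simp only [Set.mem_insert_iff, Set.mem_singleton_iff] at hx ⊢
        tauto
    rw [e2]
    refine le_antisymm (Nat.sInf_le hmem) (le_csInf ⟨h + 1, hmem⟩ ?_)
    intro m hm
    by_contra hlt
    push_neg at hlt
    obtain ⟨hm1, hm2⟩ := hm
    refine not_bh_small h m (by omega) (by omega) _ ?_ ?_ ?_ hm2
    · simp
    · simp
    · simp
  -- Step 2 : the image of Iic 2
  have him2 : a '' Set.Iic 2 = ({0, 1, h + 1} : Set ℕ) := by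
    ext x
    simp only [Set.mem_image, Set.mem_Iic, Set.mem_insert_iff, Set.mem_singleton_iff]
    constructor
    · rintro ⟨k, hk, rfl⟩
      interval_cases k
      · simp [h0]
      · simp [h1]
      · simp [ha2]
    · rintro (rfl | rfl | rfl)
      · exact ⟨0, by omega, h0⟩
      · exact ⟨1, by omega, h1⟩
      · exact ⟨2, by omega, ha2⟩
  have e3 := hgreedy 2 (by omega)
  rw [ha2, him2] at e3
  have hmem : (h ^ 2 + h + 1) ∈
      {m : ℕ | h + 1 < m ∧ IsBhSet h (insert m ({0, 1, h + 1} : Set ℕ))} := by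
    constructor
    · exact hM1
    · refine bh_anti ?_ (main_bh h hh)
      intro x hx
      simp only [Set.mem_insert_iff, Set.mem_singleton_iff] at hx ⊢
      tauto
  rw [e3]
  refine le_antisymm (Nat.sInf_le hmem) (le_csInf ⟨h ^ 2 + h + 1, hmem⟩ ?_)
  intro m hm
  by_contra hlt
  push_neg at hlt
  obtain ⟨hm1, hm2⟩ := hm
  refine not_bh_mid h m hh hm1 (by omega) _ ?_ ?_ ?_ ?_ hm2
  · simp
  · simp
  · simp
  · simp
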